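/- The state ρ₅₅ is not separable; together with the positivity of its partial transpose, ρ₅₅ is a PPT entangled state. -/

import Mathlib

open Matrix ComplexOrder

noncomputable def M55 : Matrix (Fin 9) (Fin 9) ℂ :=
  !![0, 0, 0, 0, 0, 0, 0, 0, 0;
     0, 2, -1, 0, 0, 0, 0, 0, 1;
     0, -1, 1, 0, 0, 0, 0, 0, -1;
     0, 0, 0, 3, 0, -1, -1, 0, 0;
     0, 0, 0, 0, 0, 0, 0, 0, 0;
     0, 0, 0, -1, 0, 1, 1, 0, 0;
     0, 0, 0, -1, 0, 1, 1, 0, 0;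
     0, 0, 0, 0, 0, 0, 0, 2, -2;
     0, 1, -1, 0, 0, 0, 0, -2, 3]

/-- The index map `(i, j) ↦ 3 i + j` from `Fin 3 × Fin 3` to `Fin 9`. -/
def idx (p : Fin 3 × Fin 3) : Fin 9 :=
  ⟨3 * p.1.val + p.2.val, by have h1 := p.1.isLt; have h2 := p.2.isLt; omega⟩

/-- The state `ρ₅₅`, viewed as an operator on `ℂ³ ⊗ ℂ³`. -/
noncomputable def rho55 : Matrix (Fin 3 × Fin 3) (Fin 3 × Fin 3) ℂ :=
  fun p q => (1 / 13 : ℂ) * M55 (idx p) (idx q)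

/-- The partial transpose on the second factor: `(ρ^{T_B})_{(i,j),(k,l)} = ρ_{(i,l),(k,j)}`. -/
noncomputable def ptrans (ρ : Matrix (Fin 3 × Fin 3) (Fin 3 × Fin 3) ℂ) :
    Matrix (Fin 3 × Fin 3) (Fin 3 × Fin 3) ℂ :=
  fun p q => ρ (p.1, q.2) (q.1, p.2)

/-- The product vector `a ⊗ b ∈ ℂ³ ⊗ ℂ³`, with `(i,j)`-th component `a i * b j`. -/
def prodVec (a b : Fin 3 → ℂ) : Fin 3 × Fin 3 → ℂ := fun p => a p.1 * b p.2

/-- A matrix on `ℂ³ ⊗ ℂ³` is separable if it is a finite sum of outer products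
`w w†` of product vectors `w = a ⊗ b`. -/
noncomputable def IsSeparableState (ρ : Matrix (Fin 3 × Fin 3) (Fin 3 × Fin 3) ℂ) : Prop :=
  ∃ (k : ℕ) (a b : Fin k → Fin 3 → ℂ),
    ρ = ∑ i : Fin k,
      Matrix.vecMulVec (prodVec (a i) (b i)) (fun q => starRingEnd ℂ (prodVec (a i) (b i) q))

/-! ### Auxiliary lemmas -/

lemma idx_00 : idx ((0 : Fin 3), (0 : Fin 3)) = (0 : Fin 9) := rfl
lemma idx_01 : idx ((0 : Fin 3), (1 : Fin 3)) = (1 : Fin 9) := rfl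
lemma idx_02 : idx ((0 : Fin 3), (2 : Fin 3)) = (2 : Fin 9) := rfl
lemma idx_10 : idx ((1 : Fin 3), (0 : Fin 3)) = (3 : Fin 9) := rfl
lemma idx_11 : idx ((1 : Fin 3), (1 : Fin 3)) = (4 : Fin 9) := rfl
lemma idx_12 : idx ((1 : Fin 3), (2 : Fin 3)) = (5 : Fin 9) := rfl
lemma idx_20 : idx ((2 : Fin 3), (0 : Fin 3)) = (6 : Fin 9) := rfl
lemma idx_21 : idx ((2 : Fin 3), (1 : Fin 3)) = (7 : Fin 9) := rfl
lemma idx_22 : idx ((2 : Fin 3), (2 : Fin 3)) = (8 : Fin 9) := rfl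

lemma cv9_0 {α : Type*} (x0 x1 x2 x3 x4 x5 x6 x7 x8 : α) : ![x0, x1, x2, x3, x4, x5, x6, x7, x8] (0 : Fin 9) = x0 := rfl
lemma cv9_1 {α : Type*} (x0 x1 x2 x3 x4 x5 x6 x7 x8 : α) : ![x0, x1, x2, x3, x4, x5, x6, x7, x8] (1 : Fin 9) = x1 := rfl
lemma cv9_2 {α : Type*} (x0 x1 x2 x3 x4 x5 x6 x7 x8 : α) : ![x0, x1, x2, x3, x4, x5, x6, x7, x8] (2 : Fin 9) = x2 := rfl
lemma cv9_3 {α : Type*} (x0 x1 x2 x3 x4 x5 x6 x7 x8 : α) : ![x0, x1, x2, x3, x4, x5, x6, x7, x8] (3 : Fin 9) = x3 := rfl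
lemma cv9_4 {α : Type*} (x0 x1 x2 x3 x4 x5 x6 x7 x8 : α) : ![x0, x1, x2, x3, x4, x5, x6, x7, x8] (4 : Fin 9) = x4 := rfl
lemma cv9_5 {α : Type*} (x0 x1 x2 x3 x4 x5 x6 x7 x8 : α) : ![x0, x1, x2, x3, x4, x5, x6, x7, x8] (5 : Fin 9) = x5 := rfl
lemma cv9_6 {α : Type*} (x0 x1 x2 x3 x4 x5 x6 x7 x8 : α) : ![x0, x1, x2, x3, x4, x5, x6, x7, x8] (6 : Fin 9) = x6 := rfl
lemma cv9_7 {α : Type*} (x0 x1 x2 x3 x4 x5 x6 x7 x8 : α) : ![x0, x1, x2, x3, x4, x5, x6, x7, x8] (7 : Fin 9) = x7 := rfl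
lemma cv9_8 {α : Type*} (x0 x1 x2 x3 x4 x5 x6 x7 x8 : α) : ![x0, x1, x2, x3, x4, x5, x6, x7, x8] (8 : Fin 9) = x8 := rfl

/-- A square-root certificate for `M55`. -/
noncomputable def B55 : Matrix (Fin 7) (Fin 9) ℂ :=
  !![0, 1, -1, 0, 0, 0, 0, 0, 1;
     0, 1, 0, 0, 0, 0, 0, 0, 0;
     0, 0, 0, -1, 0, 1, 1, 0, 0;
     0, 0, 0, 1, 0, 0, 0, 0, 0;
     0, 0, 0, 1, 0, 0, 0, 0, 0;
     0, 0, 0, 0, 0, 0, 0, 1, -1;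
     0, 0, 0, 0, 0, 0, 0, 1, -1]

/-- `13` times the partial transpose of `rho55`, as a `9 × 9` matrix. -/
noncomputable def G55 : Matrix (Fin 9) (Fin 9) ℂ :=
  !![0, 0, 0, 0, 0, 0, 0, 0, 0;
     0, 2, -1, 0, 0, 0, 0, 0, 0;
     0, -1, 1, 0, 0, 0, 0, 1, -1;
     0, 0, 0, 3, 0, -1, -1, 0, 1;
     0, 0, 0, 0, 0, 0, 0, 0, 0;
     0, 0, 0, -1, 0, 1, 0, 0, 0;
     0, 0, 0, -1, 0, 0, 1, 0, 0;
     0, 0, 1, 0, 0, 0, 0, 2, -2;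
     0, 0, -1, 1, 0, 0, 0, -2, 3]

/-- A square-root certificate for `G55`. -/
noncomputable def C55 : Matrix (Fin 12) (Fin 9) ℂ :=
  !![0, 1, -1/2, 0, 0, 0, 0, 0, 0;
     0, 1, -1/2, 0, 0, 0, 0, 0, 0;
     0, 0, 1/2, 0, 0, 0, 0, 1, -1;
     0, 0, 1/2, 0, 0, 0, 0, 1, -1;
     0, 0, 0, 1, 0, -1/3, -1/3, 0, 1/3;
     0, 0, 0, 1, 0, -1/3, -1/3, 0, 1/3;
     0, 0, 0, 1, 0, -1/3, -1/3, 0, 1/3;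
     0, 0, 0, 0, 0, 2/3, -1/3, 0, 1/3;
     0, 0, 0, 0, 0, 1/3, -1/6, 0, 1/6;
     0, 0, 0, 0, 0, 1/3, -1/6, 0, 1/6;
     0, 0, 0, 0, 0, 0, 1/2, 0, 1/2;
     0, 0, 0, 0, 0, 0, 1/2, 0, 1/2]

set_option maxHeartbeats 2000000 in
lemma B55_cert : B55ᴴ * B55 = M55 := by
  rw [← Matrix.ext_iff]
  simp only [Fin.forall_fin_succ, Fin.forall_fin_one, Matrix.mul_apply, Fin.sum_univ_succ,
    Fin.sum_univ_zero, Matrix.conjTranspose_apply, M55, B55, Matrix.cons_val', Matrix.cons_val_zero,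
    Matrix.cons_val_succ, Matrix.of_apply, Matrix.cons_val_fin_one, Matrix.empty_val',
    Matrix.cons_val_one, Matrix.head_cons, Matrix.head_fin_const, Fin.succ_zero_eq_one, and_true]
  norm_num

set_option maxHeartbeats 2000000 in
lemma C55_cert : C55ᴴ * C55 = G55 := by
  rw [← Matrix.ext_iff]
  simp only [Fin.forall_fin_succ, Fin.forall_fin_one, Matrix.mul_apply, Fin.sum_univ_succ,
    Fin.sum_univ_zero, Matrix.conjTranspose_apply, G55, C55, Matrix.cons_val', Matrix.cons_val_zero,
    Matrix.cons_val_succ, Matrix.of_apply, Matrix.cons_val_fin_one, Matrix.empty_val',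
    Matrix.cons_val_one, Matrix.head_cons, Matrix.head_fin_const, Fin.succ_zero_eq_one, and_true]
  norm_num

lemma smul_psd {n : Type*} [Fintype n] {A : Matrix n n ℂ} (hA : A.PosSemidef) {c : ℂ}
    (hc : 0 ≤ c) : (c • A).PosSemidef := by
  have hre : (starRingEnd ℂ) c = c := by
    rw [Complex.le_def] at hc
    exact Complex.ext rfl (by simp [hc.2.symm])
  constructor
  · rw [Matrix.IsHermitian, Matrix.conjTranspose_smul, hA.1]
    rw [show (star c) = c from hre]
  · intro x
    exact (hA.smul hc).2 x

lemma c13_nonneg : (0 : ℂ) ≤ (1/13 : ℂ) := by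
  rw [Complex.le_def]; norm_num

lemma rho55_psd : rho55.PosSemidef := by
  have h : M55.PosSemidef := B55_cert ▸ Matrix.posSemidef_conjTranspose_mul_self B55
  have e : rho55 = (1/13 : ℂ) • (M55.submatrix idx idx) := rfl
  rw [e]
  exact smul_psd (h.submatrix idx) c13_nonneg

lemma ptrans_eq : ptrans rho55 = (1/13 : ℂ) • (G55.submatrix idx idx) := by
  ext ⟨i, j⟩ ⟨k, l⟩
  fin_cases i <;> fin_cases j <;> fin_cases k <;> fin_cases l <;> rfl

lemma ptrans_psd : (ptrans rho55).PosSemidef := by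
  have h : G55.PosSemidef := C55_cert ▸ Matrix.posSemidef_conjTranspose_mul_self C55
  rw [ptrans_eq]
  exact smul_psd (h.submatrix idx) c13_nonneg

/-! ### Entry value lemmas (all proved by `rfl`) -/

lemma rE_00_00 : rho55 ((0 : Fin 3), (0 : Fin 3)) ((0 : Fin 3), (0 : Fin 3)) = 1/13 * (0 : ℂ) := rfl
lemma rE_00_01 : rho55 ((0 : Fin 3), (0 : Fin 3)) ((0 : Fin 3), (1 : Fin 3)) = 1/13 * (0 : ℂ) := rfl
lemma rE_00_02 : rho55 ((0 : Fin 3), (0 : Fin 3)) ((0 : Fin 3), (2 : Fin 3)) = 1/13 * (0 : ℂ) := rfl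
lemma rE_00_10 : rho55 ((0 : Fin 3), (0 : Fin 3)) ((1 : Fin 3), (0 : Fin 3)) = 1/13 * (0 : ℂ) := rfl
lemma rE_00_11 : rho55 ((0 : Fin 3), (0 : Fin 3)) ((1 : Fin 3), (1 : Fin 3)) = 1/13 * (0 : ℂ) := rfl
lemma rE_00_12 : rho55 ((0 : Fin 3), (0 : Fin 3)) ((1 : Fin 3), (2 : Fin 3)) = 1/13 * (0 : ℂ) := rfl
lemma rE_00_20 : rho55 ((0 : Fin 3), (0 : Fin 3)) ((2 : Fin 3), (0 : Fin 3)) = 1/13 * (0 : ℂ) := rfl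
lemma rE_00_21 : rho55 ((0 : Fin 3), (0 : Fin 3)) ((2 : Fin 3), (1 : Fin 3)) = 1/13 * (0 : ℂ) := rfl
lemma rE_00_22 : rho55 ((0 : Fin 3), (0 : Fin 3)) ((2 : Fin 3), (2 : Fin 3)) = 1/13 * (0 : ℂ) := rfl
lemma rE_01_00 : rho55 ((0 : Fin 3), (1 : Fin 3)) ((0 : Fin 3), (0 : Fin 3)) = 1/13 * (0 : ℂ) := rfl
lemma rE_01_01 : rho55 ((0 : Fin 3), (1 : Fin 3)) ((0 : Fin 3), (1 : Fin 3)) = 1/13 * (2 : ℂ) := rfl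
lemma rE_01_02 : rho55 ((0 : Fin 3), (1 : Fin 3)) ((0 : Fin 3), (2 : Fin 3)) = 1/13 * (-1 : ℂ) := rfl
lemma rE_01_10 : rho55 ((0 : Fin 3), (1 : Fin 3)) ((1 : Fin 3), (0 : Fin 3)) = 1/13 * (0 : ℂ) := rfl
lemma rE_01_11 : rho55 ((0 : Fin 3), (1 : Fin 3)) ((1 : Fin 3), (1 : Fin 3)) = 1/13 * (0 : ℂ) := rfl
lemma rE_01_12 : rho55 ((0 : Fin 3), (1 : Fin 3)) ((1 : Fin 3), (2 : Fin 3)) = 1/13 * (0 : ℂ) := rfl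
lemma rE_01_20 : rho55 ((0 : Fin 3), (1 : Fin 3)) ((2 : Fin 3), (0 : Fin 3)) = 1/13 * (0 : ℂ) := rfl
lemma rE_01_21 : rho55 ((0 : Fin 3), (1 : Fin 3)) ((2 : Fin 3), (1 : Fin 3)) = 1/13 * (0 : ℂ) := rfl
lemma rE_01_22 : rho55 ((0 : Fin 3), (1 : Fin 3)) ((2 : Fin 3), (2 : Fin 3)) = 1/13 * (1 : ℂ) := rfl
lemma rE_02_00 : rho55 ((0 : Fin 3), (2 : Fin 3)) ((0 : Fin 3), (0 : Fin 3)) = 1/13 * (0 : ℂ) := rfl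
lemma rE_02_01 : rho55 ((0 : Fin 3), (2 : Fin 3)) ((0 : Fin 3), (1 : Fin 3)) = 1/13 * (-1 : ℂ) := rfl
lemma rE_02_02 : rho55 ((0 : Fin 3), (2 : Fin 3)) ((0 : Fin 3), (2 : Fin 3)) = 1/13 * (1 : ℂ) := rfl
lemma rE_02_10 : rho55 ((0 : Fin 3), (2 : Fin 3)) ((1 : Fin 3), (0 : Fin 3)) = 1/13 * (0 : ℂ) := rfl
lemma rE_02_11 : rho55 ((0 : Fin 3), (2 : Fin 3)) ((1 : Fin 3), (1 : Fin 3)) = 1/13 * (0 : ℂ) := rfl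
lemma rE_02_12 : rho55 ((0 : Fin 3), (2 : Fin 3)) ((1 : Fin 3), (2 : Fin 3)) = 1/13 * (0 : ℂ) := rfl
lemma rE_02_20 : rho55 ((0 : Fin 3), (2 : Fin 3)) ((2 : Fin 3), (0 : Fin 3)) = 1/13 * (0 : ℂ) := rfl
lemma rE_02_21 : rho55 ((0 : Fin 3), (2 : Fin 3)) ((2 : Fin 3), (1 : Fin 3)) = 1/13 * (0 : ℂ) := rfl
lemma rE_02_22 : rho55 ((0 : Fin 3), (2 : Fin 3)) ((2 : Fin 3), (2 : Fin 3)) = 1/13 * (-1 : ℂ) := rfl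
lemma rE_10_00 : rho55 ((1 : Fin 3), (0 : Fin 3)) ((0 : Fin 3), (0 : Fin 3)) = 1/13 * (0 : ℂ) := rfl
lemma rE_10_01 : rho55 ((1 : Fin 3), (0 : Fin 3)) ((0 : Fin 3), (1 : Fin 3)) = 1/13 * (0 : ℂ) := rfl
lemma rE_10_02 : rho55 ((1 : Fin 3), (0 : Fin 3)) ((0 : Fin 3), (2 : Fin 3)) = 1/13 * (0 : ℂ) := rfl
lemma rE_10_10 : rho55 ((1 : Fin 3), (0 : Fin 3)) ((1 : Fin 3), (0 : Fin 3)) = 1/13 * (3 : ℂ) := rfl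
lemma rE_10_11 : rho55 ((1 : Fin 3), (0 : Fin 3)) ((1 : Fin 3), (1 : Fin 3)) = 1/13 * (0 : ℂ) := rfl
lemma rE_10_12 : rho55 ((1 : Fin 3), (0 : Fin 3)) ((1 : Fin 3), (2 : Fin 3)) = 1/13 * (-1 : ℂ) := rfl
lemma rE_10_20 : rho55 ((1 : Fin 3), (0 : Fin 3)) ((2 : Fin 3), (0 : Fin 3)) = 1/13 * (-1 : ℂ) := rfl
lemma rE_10_21 : rho55 ((1 : Fin 3), (0 : Fin 3)) ((2 : Fin 3), (1 : Fin 3)) = 1/13 * (0 : ℂ) := rfl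
lemma rE_10_22 : rho55 ((1 : Fin 3), (0 : Fin 3)) ((2 : Fin 3), (2 : Fin 3)) = 1/13 * (0 : ℂ) := rfl
lemma rE_11_00 : rho55 ((1 : Fin 3), (1 : Fin 3)) ((0 : Fin 3), (0 : Fin 3)) = 1/13 * (0 : ℂ) := rfl
lemma rE_11_01 : rho55 ((1 : Fin 3), (1 : Fin 3)) ((0 : Fin 3), (1 : Fin 3)) = 1/13 * (0 : ℂ) := rfl
lemma rE_11_02 : rho55 ((1 : Fin 3), (1 : Fin 3)) ((0 : Fin 3), (2 : Fin 3)) = 1/13 * (0 : ℂ) := rfl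
lemma rE_11_10 : rho55 ((1 : Fin 3), (1 : Fin 3)) ((1 : Fin 3), (0 : Fin 3)) = 1/13 * (0 : ℂ) := rfl
lemma rE_11_11 : rho55 ((1 : Fin 3), (1 : Fin 3)) ((1 : Fin 3), (1 : Fin 3)) = 1/13 * (0 : ℂ) := rfl
lemma rE_11_12 : rho55 ((1 : Fin 3), (1 : Fin 3)) ((1 : Fin 3), (2 : Fin 3)) = 1/13 * (0 : ℂ) := rfl
lemma rE_11_20 : rho55 ((1 : Fin 3), (1 : Fin 3)) ((2 : Fin 3), (0 : Fin 3)) = 1/13 * (0 : ℂ) := rfl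
lemma rE_11_21 : rho55 ((1 : Fin 3), (1 : Fin 3)) ((2 : Fin 3), (1 : Fin 3)) = 1/13 * (0 : ℂ) := rfl
lemma rE_11_22 : rho55 ((1 : Fin 3), (1 : Fin 3)) ((2 : Fin 3), (2 : Fin 3)) = 1/13 * (0 : ℂ) := rfl
lemma rE_12_00 : rho55 ((1 : Fin 3), (2 : Fin 3)) ((0 : Fin 3), (0 : Fin 3)) = 1/13 * (0 : ℂ) := rfl
lemma rE_12_01 : rho55 ((1 : Fin 3), (2 : Fin 3)) ((0 : Fin 3), (1 : Fin 3)) = 1/13 * (0 : ℂ) := rfl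
lemma rE_12_02 : rho55 ((1 : Fin 3), (2 : Fin 3)) ((0 : Fin 3), (2 : Fin 3)) = 1/13 * (0 : ℂ) := rfl
lemma rE_12_10 : rho55 ((1 : Fin 3), (2 : Fin 3)) ((1 : Fin 3), (0 : Fin 3)) = 1/13 * (-1 : ℂ) := rfl
lemma rE_12_11 : rho55 ((1 : Fin 3), (2 : Fin 3)) ((1 : Fin 3), (1 : Fin 3)) = 1/13 * (0 : ℂ) := rfl
lemma rE_12_12 : rho55 ((1 : Fin 3), (2 : Fin 3)) ((1 : Fin 3), (2 : Fin 3)) = 1/13 * (1 : ℂ) := rfl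
lemma rE_12_20 : rho55 ((1 : Fin 3), (2 : Fin 3)) ((2 : Fin 3), (0 : Fin 3)) = 1/13 * (1 : ℂ) := rfl
lemma rE_12_21 : rho55 ((1 : Fin 3), (2 : Fin 3)) ((2 : Fin 3), (1 : Fin 3)) = 1/13 * (0 : ℂ) := rfl
lemma rE_12_22 : rho55 ((1 : Fin 3), (2 : Fin 3)) ((2 : Fin 3), (2 : Fin 3)) = 1/13 * (0 : ℂ) := rfl
lemma rE_20_00 : rho55 ((2 : Fin 3), (0 : Fin 3)) ((0 : Fin 3), (0 : Fin 3)) = 1/13 * (0 : ℂ) := rfl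
lemma rE_20_01 : rho55 ((2 : Fin 3), (0 : Fin 3)) ((0 : Fin 3), (1 : Fin 3)) = 1/13 * (0 : ℂ) := rfl
lemma rE_20_02 : rho55 ((2 : Fin 3), (0 : Fin 3)) ((0 : Fin 3), (2 : Fin 3)) = 1/13 * (0 : ℂ) := rfl
lemma rE_20_10 : rho55 ((2 : Fin 3), (0 : Fin 3)) ((1 : Fin 3), (0 : Fin 3)) = 1/13 * (-1 : ℂ) := rfl
lemma rE_20_11 : rho55 ((2 : Fin 3), (0 : Fin 3)) ((1 : Fin 3), (1 : Fin 3)) = 1/13 * (0 : ℂ) := rfl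
lemma rE_20_12 : rho55 ((2 : Fin 3), (0 : Fin 3)) ((1 : Fin 3), (2 : Fin 3)) = 1/13 * (1 : ℂ) := rfl
lemma rE_20_20 : rho55 ((2 : Fin 3), (0 : Fin 3)) ((2 : Fin 3), (0 : Fin 3)) = 1/13 * (1 : ℂ) := rfl
lemma rE_20_21 : rho55 ((2 : Fin 3), (0 : Fin 3)) ((2 : Fin 3), (1 : Fin 3)) = 1/13 * (0 : ℂ) := rfl
lemma rE_20_22 : rho55 ((2 : Fin 3), (0 : Fin 3)) ((2 : Fin 3), (2 : Fin 3)) = 1/13 * (0 : ℂ) := rfl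
lemma rE_21_00 : rho55 ((2 : Fin 3), (1 : Fin 3)) ((0 : Fin 3), (0 : Fin 3)) = 1/13 * (0 : ℂ) := rfl
lemma rE_21_01 : rho55 ((2 : Fin 3), (1 : Fin 3)) ((0 : Fin 3), (1 : Fin 3)) = 1/13 * (0 : ℂ) := rfl
lemma rE_21_02 : rho55 ((2 : Fin 3), (1 : Fin 3)) ((0 : Fin 3), (2 : Fin 3)) = 1/13 * (0 : ℂ) := rfl
lemma rE_21_10 : rho55 ((2 : Fin 3), (1 : Fin 3)) ((1 : Fin 3), (0 : Fin 3)) = 1/13 * (0 : ℂ) := rfl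
lemma rE_21_11 : rho55 ((2 : Fin 3), (1 : Fin 3)) ((1 : Fin 3), (1 : Fin 3)) = 1/13 * (0 : ℂ) := rfl
lemma rE_21_12 : rho55 ((2 : Fin 3), (1 : Fin 3)) ((1 : Fin 3), (2 : Fin 3)) = 1/13 * (0 : ℂ) := rfl
lemma rE_21_20 : rho55 ((2 : Fin 3), (1 : Fin 3)) ((2 : Fin 3), (0 : Fin 3)) = 1/13 * (0 : ℂ) := rfl
lemma rE_21_21 : rho55 ((2 : Fin 3), (1 : Fin 3)) ((2 : Fin 3), (1 : Fin 3)) = 1/13 * (2 : ℂ) := rfl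
lemma rE_21_22 : rho55 ((2 : Fin 3), (1 : Fin 3)) ((2 : Fin 3), (2 : Fin 3)) = 1/13 * (-2 : ℂ) := rfl
lemma rE_22_00 : rho55 ((2 : Fin 3), (2 : Fin 3)) ((0 : Fin 3), (0 : Fin 3)) = 1/13 * (0 : ℂ) := rfl
lemma rE_22_01 : rho55 ((2 : Fin 3), (2 : Fin 3)) ((0 : Fin 3), (1 : Fin 3)) = 1/13 * (1 : ℂ) := rfl
lemma rE_22_02 : rho55 ((2 : Fin 3), (2 : Fin 3)) ((0 : Fin 3), (2 : Fin 3)) = 1/13 * (-1 : ℂ) := rfl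
lemma rE_22_10 : rho55 ((2 : Fin 3), (2 : Fin 3)) ((1 : Fin 3), (0 : Fin 3)) = 1/13 * (0 : ℂ) := rfl
lemma rE_22_11 : rho55 ((2 : Fin 3), (2 : Fin 3)) ((1 : Fin 3), (1 : Fin 3)) = 1/13 * (0 : ℂ) := rfl
lemma rE_22_12 : rho55 ((2 : Fin 3), (2 : Fin 3)) ((1 : Fin 3), (2 : Fin 3)) = 1/13 * (0 : ℂ) := rfl
lemma rE_22_20 : rho55 ((2 : Fin 3), (2 : Fin 3)) ((2 : Fin 3), (0 : Fin 3)) = 1/13 * (0 : ℂ) := rfl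
lemma rE_22_21 : rho55 ((2 : Fin 3), (2 : Fin 3)) ((2 : Fin 3), (1 : Fin 3)) = 1/13 * (-2 : ℂ) := rfl
lemma rE_22_22 : rho55 ((2 : Fin 3), (2 : Fin 3)) ((2 : Fin 3), (2 : Fin 3)) = 1/13 * (3 : ℂ) := rfl

lemma pE_00_00 : ptrans rho55 ((0 : Fin 3), (0 : Fin 3)) ((0 : Fin 3), (0 : Fin 3)) = 1/13 * (0 : ℂ) := rfl
lemma pE_00_01 : ptrans rho55 ((0 : Fin 3), (0 : Fin 3)) ((0 : Fin 3), (1 : Fin 3)) = 1/13 * (0 : ℂ) := rfl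
lemma pE_00_02 : ptrans rho55 ((0 : Fin 3), (0 : Fin 3)) ((0 : Fin 3), (2 : Fin 3)) = 1/13 * (0 : ℂ) := rfl
lemma pE_00_10 : ptrans rho55 ((0 : Fin 3), (0 : Fin 3)) ((1 : Fin 3), (0 : Fin 3)) = 1/13 * (0 : ℂ) := rfl
lemma pE_00_11 : ptrans rho55 ((0 : Fin 3), (0 : Fin 3)) ((1 : Fin 3), (1 : Fin 3)) = 1/13 * (0 : ℂ) := rfl
lemma pE_00_12 : ptrans rho55 ((0 : Fin 3), (0 : Fin 3)) ((1 : Fin 3), (2 : Fin 3)) = 1/13 * (0 : ℂ) := rfl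
lemma pE_00_20 : ptrans rho55 ((0 : Fin 3), (0 : Fin 3)) ((2 : Fin 3), (0 : Fin 3)) = 1/13 * (0 : ℂ) := rfl
lemma pE_00_21 : ptrans rho55 ((0 : Fin 3), (0 : Fin 3)) ((2 : Fin 3), (1 : Fin 3)) = 1/13 * (0 : ℂ) := rfl
lemma pE_00_22 : ptrans rho55 ((0 : Fin 3), (0 : Fin 3)) ((2 : Fin 3), (2 : Fin 3)) = 1/13 * (0 : ℂ) := rfl
lemma pE_01_00 : ptrans rho55 ((0 : Fin 3), (1 : Fin 3)) ((0 : Fin 3), (0 : Fin 3)) = 1/13 * (0 : ℂ) := rfl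
lemma pE_01_01 : ptrans rho55 ((0 : Fin 3), (1 : Fin 3)) ((0 : Fin 3), (1 : Fin 3)) = 1/13 * (2 : ℂ) := rfl
lemma pE_01_02 : ptrans rho55 ((0 : Fin 3), (1 : Fin 3)) ((0 : Fin 3), (2 : Fin 3)) = 1/13 * (-1 : ℂ) := rfl
lemma pE_01_10 : ptrans rho55 ((0 : Fin 3), (1 : Fin 3)) ((1 : Fin 3), (0 : Fin 3)) = 1/13 * (0 : ℂ) := rfl
lemma pE_01_11 : ptrans rho55 ((0 : Fin 3), (1 : Fin 3)) ((1 : Fin 3), (1 : Fin 3)) = 1/13 * (0 : ℂ) := rfl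
lemma pE_01_12 : ptrans rho55 ((0 : Fin 3), (1 : Fin 3)) ((1 : Fin 3), (2 : Fin 3)) = 1/13 * (0 : ℂ) := rfl
lemma pE_01_20 : ptrans rho55 ((0 : Fin 3), (1 : Fin 3)) ((2 : Fin 3), (0 : Fin 3)) = 1/13 * (0 : ℂ) := rfl
lemma pE_01_21 : ptrans rho55 ((0 : Fin 3), (1 : Fin 3)) ((2 : Fin 3), (1 : Fin 3)) = 1/13 * (0 : ℂ) := rfl
lemma pE_01_22 : ptrans rho55 ((0 : Fin 3), (1 : Fin 3)) ((2 : Fin 3), (2 : Fin 3)) = 1/13 * (0 : ℂ) := rfl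
lemma pE_02_00 : ptrans rho55 ((0 : Fin 3), (2 : Fin 3)) ((0 : Fin 3), (0 : Fin 3)) = 1/13 * (0 : ℂ) := rfl
lemma pE_02_01 : ptrans rho55 ((0 : Fin 3), (2 : Fin 3)) ((0 : Fin 3), (1 : Fin 3)) = 1/13 * (-1 : ℂ) := rfl
lemma pE_02_02 : ptrans rho55 ((0 : Fin 3), (2 : Fin 3)) ((0 : Fin 3), (2 : Fin 3)) = 1/13 * (1 : ℂ) := rfl
lemma pE_02_10 : ptrans rho55 ((0 : Fin 3), (2 : Fin 3)) ((1 : Fin 3), (0 : Fin 3)) = 1/13 * (0 : ℂ) := rfl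
lemma pE_02_11 : ptrans rho55 ((0 : Fin 3), (2 : Fin 3)) ((1 : Fin 3), (1 : Fin 3)) = 1/13 * (0 : ℂ) := rfl
lemma pE_02_12 : ptrans rho55 ((0 : Fin 3), (2 : Fin 3)) ((1 : Fin 3), (2 : Fin 3)) = 1/13 * (0 : ℂ) := rfl
lemma pE_02_20 : ptrans rho55 ((0 : Fin 3), (2 : Fin 3)) ((2 : Fin 3), (0 : Fin 3)) = 1/13 * (0 : ℂ) := rfl
lemma pE_02_21 : ptrans rho55 ((0 : Fin 3), (2 : Fin 3)) ((2 : Fin 3), (1 : Fin 3)) = 1/13 * (1 : ℂ) := rfl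
lemma pE_02_22 : ptrans rho55 ((0 : Fin 3), (2 : Fin 3)) ((2 : Fin 3), (2 : Fin 3)) = 1/13 * (-1 : ℂ) := rfl
lemma pE_10_00 : ptrans rho55 ((1 : Fin 3), (0 : Fin 3)) ((0 : Fin 3), (0 : Fin 3)) = 1/13 * (0 : ℂ) := rfl
lemma pE_10_01 : ptrans rho55 ((1 : Fin 3), (0 : Fin 3)) ((0 : Fin 3), (1 : Fin 3)) = 1/13 * (0 : ℂ) := rfl
lemma pE_10_02 : ptrans rho55 ((1 : Fin 3), (0 : Fin 3)) ((0 : Fin 3), (2 : Fin 3)) = 1/13 * (0 : ℂ) := rfl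
lemma pE_10_10 : ptrans rho55 ((1 : Fin 3), (0 : Fin 3)) ((1 : Fin 3), (0 : Fin 3)) = 1/13 * (3 : ℂ) := rfl
lemma pE_10_11 : ptrans rho55 ((1 : Fin 3), (0 : Fin 3)) ((1 : Fin 3), (1 : Fin 3)) = 1/13 * (0 : ℂ) := rfl
lemma pE_10_12 : ptrans rho55 ((1 : Fin 3), (0 : Fin 3)) ((1 : Fin 3), (2 : Fin 3)) = 1/13 * (-1 : ℂ) := rfl
lemma pE_10_20 : ptrans rho55 ((1 : Fin 3), (0 : Fin 3)) ((2 : Fin 3), (0 : Fin 3)) = 1/13 * (-1 : ℂ) := rfl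
lemma pE_10_21 : ptrans rho55 ((1 : Fin 3), (0 : Fin 3)) ((2 : Fin 3), (1 : Fin 3)) = 1/13 * (0 : ℂ) := rfl
lemma pE_10_22 : ptrans rho55 ((1 : Fin 3), (0 : Fin 3)) ((2 : Fin 3), (2 : Fin 3)) = 1/13 * (1 : ℂ) := rfl
lemma pE_11_00 : ptrans rho55 ((1 : Fin 3), (1 : Fin 3)) ((0 : Fin 3), (0 : Fin 3)) = 1/13 * (0 : ℂ) := rfl
lemma pE_11_01 : ptrans rho55 ((1 : Fin 3), (1 : Fin 3)) ((0 : Fin 3), (1 : Fin 3)) = 1/13 * (0 : ℂ) := rfl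
lemma pE_11_02 : ptrans rho55 ((1 : Fin 3), (1 : Fin 3)) ((0 : Fin 3), (2 : Fin 3)) = 1/13 * (0 : ℂ) := rfl
lemma pE_11_10 : ptrans rho55 ((1 : Fin 3), (1 : Fin 3)) ((1 : Fin 3), (0 : Fin 3)) = 1/13 * (0 : ℂ) := rfl
lemma pE_11_11 : ptrans rho55 ((1 : Fin 3), (1 : Fin 3)) ((1 : Fin 3), (1 : Fin 3)) = 1/13 * (0 : ℂ) := rfl
lemma pE_11_12 : ptrans rho55 ((1 : Fin 3), (1 : Fin 3)) ((1 : Fin 3), (2 : Fin 3)) = 1/13 * (0 : ℂ) := rfl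
lemma pE_11_20 : ptrans rho55 ((1 : Fin 3), (1 : Fin 3)) ((2 : Fin 3), (0 : Fin 3)) = 1/13 * (0 : ℂ) := rfl
lemma pE_11_21 : ptrans rho55 ((1 : Fin 3), (1 : Fin 3)) ((2 : Fin 3), (1 : Fin 3)) = 1/13 * (0 : ℂ) := rfl
lemma pE_11_22 : ptrans rho55 ((1 : Fin 3), (1 : Fin 3)) ((2 : Fin 3), (2 : Fin 3)) = 1/13 * (0 : ℂ) := rfl
lemma pE_12_00 : ptrans rho55 ((1 : Fin 3), (2 : Fin 3)) ((0 : Fin 3), (0 : Fin 3)) = 1/13 * (0 : ℂ) := rfl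
lemma pE_12_01 : ptrans rho55 ((1 : Fin 3), (2 : Fin 3)) ((0 : Fin 3), (1 : Fin 3)) = 1/13 * (0 : ℂ) := rfl
lemma pE_12_02 : ptrans rho55 ((1 : Fin 3), (2 : Fin 3)) ((0 : Fin 3), (2 : Fin 3)) = 1/13 * (0 : ℂ) := rfl
lemma pE_12_10 : ptrans rho55 ((1 : Fin 3), (2 : Fin 3)) ((1 : Fin 3), (0 : Fin 3)) = 1/13 * (-1 : ℂ) := rfl
lemma pE_12_11 : ptrans rho55 ((1 : Fin 3), (2 : Fin 3)) ((1 : Fin 3), (1 : Fin 3)) = 1/13 * (0 : ℂ) := rfl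
lemma pE_12_12 : ptrans rho55 ((1 : Fin 3), (2 : Fin 3)) ((1 : Fin 3), (2 : Fin 3)) = 1/13 * (1 : ℂ) := rfl
lemma pE_12_20 : ptrans rho55 ((1 : Fin 3), (2 : Fin 3)) ((2 : Fin 3), (0 : Fin 3)) = 1/13 * (0 : ℂ) := rfl
lemma pE_12_21 : ptrans rho55 ((1 : Fin 3), (2 : Fin 3)) ((2 : Fin 3), (1 : Fin 3)) = 1/13 * (0 : ℂ) := rfl
lemma pE_12_22 : ptrans rho55 ((1 : Fin 3), (2 : Fin 3)) ((2 : Fin 3), (2 : Fin 3)) = 1/13 * (0 : ℂ) := rfl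
lemma pE_20_00 : ptrans rho55 ((2 : Fin 3), (0 : Fin 3)) ((0 : Fin 3), (0 : Fin 3)) = 1/13 * (0 : ℂ) := rfl
lemma pE_20_01 : ptrans rho55 ((2 : Fin 3), (0 : Fin 3)) ((0 : Fin 3), (1 : Fin 3)) = 1/13 * (0 : ℂ) := rfl
lemma pE_20_02 : ptrans rho55 ((2 : Fin 3), (0 : Fin 3)) ((0 : Fin 3), (2 : Fin 3)) = 1/13 * (0 : ℂ) := rfl
lemma pE_20_10 : ptrans rho55 ((2 : Fin 3), (0 : Fin 3)) ((1 : Fin 3), (0 : Fin 3)) = 1/13 * (-1 : ℂ) := rfl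
lemma pE_20_11 : ptrans rho55 ((2 : Fin 3), (0 : Fin 3)) ((1 : Fin 3), (1 : Fin 3)) = 1/13 * (0 : ℂ) := rfl
lemma pE_20_12 : ptrans rho55 ((2 : Fin 3), (0 : Fin 3)) ((1 : Fin 3), (2 : Fin 3)) = 1/13 * (0 : ℂ) := rfl
lemma pE_20_20 : ptrans rho55 ((2 : Fin 3), (0 : Fin 3)) ((2 : Fin 3), (0 : Fin 3)) = 1/13 * (1 : ℂ) := rfl
lemma pE_20_21 : ptrans rho55 ((2 : Fin 3), (0 : Fin 3)) ((2 : Fin 3), (1 : Fin 3)) = 1/13 * (0 : ℂ) := rfl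
lemma pE_20_22 : ptrans rho55 ((2 : Fin 3), (0 : Fin 3)) ((2 : Fin 3), (2 : Fin 3)) = 1/13 * (0 : ℂ) := rfl
lemma pE_21_00 : ptrans rho55 ((2 : Fin 3), (1 : Fin 3)) ((0 : Fin 3), (0 : Fin 3)) = 1/13 * (0 : ℂ) := rfl
lemma pE_21_01 : ptrans rho55 ((2 : Fin 3), (1 : Fin 3)) ((0 : Fin 3), (1 : Fin 3)) = 1/13 * (0 : ℂ) := rfl
lemma pE_21_02 : ptrans rho55 ((2 : Fin 3), (1 : Fin 3)) ((0 : Fin 3), (2 : Fin 3)) = 1/13 * (1 : ℂ) := rfl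
lemma pE_21_10 : ptrans rho55 ((2 : Fin 3), (1 : Fin 3)) ((1 : Fin 3), (0 : Fin 3)) = 1/13 * (0 : ℂ) := rfl
lemma pE_21_11 : ptrans rho55 ((2 : Fin 3), (1 : Fin 3)) ((1 : Fin 3), (1 : Fin 3)) = 1/13 * (0 : ℂ) := rfl
lemma pE_21_12 : ptrans rho55 ((2 : Fin 3), (1 : Fin 3)) ((1 : Fin 3), (2 : Fin 3)) = 1/13 * (0 : ℂ) := rfl
lemma pE_21_20 : ptrans rho55 ((2 : Fin 3), (1 : Fin 3)) ((2 : Fin 3), (0 : Fin 3)) = 1/13 * (0 : ℂ) := rfl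
lemma pE_21_21 : ptrans rho55 ((2 : Fin 3), (1 : Fin 3)) ((2 : Fin 3), (1 : Fin 3)) = 1/13 * (2 : ℂ) := rfl
lemma pE_21_22 : ptrans rho55 ((2 : Fin 3), (1 : Fin 3)) ((2 : Fin 3), (2 : Fin 3)) = 1/13 * (-2 : ℂ) := rfl
lemma pE_22_00 : ptrans rho55 ((2 : Fin 3), (2 : Fin 3)) ((0 : Fin 3), (0 : Fin 3)) = 1/13 * (0 : ℂ) := rfl
lemma pE_22_01 : ptrans rho55 ((2 : Fin 3), (2 : Fin 3)) ((0 : Fin 3), (1 : Fin 3)) = 1/13 * (0 : ℂ) := rfl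
lemma pE_22_02 : ptrans rho55 ((2 : Fin 3), (2 : Fin 3)) ((0 : Fin 3), (2 : Fin 3)) = 1/13 * (-1 : ℂ) := rfl
lemma pE_22_10 : ptrans rho55 ((2 : Fin 3), (2 : Fin 3)) ((1 : Fin 3), (0 : Fin 3)) = 1/13 * (1 : ℂ) := rfl
lemma pE_22_11 : ptrans rho55 ((2 : Fin 3), (2 : Fin 3)) ((1 : Fin 3), (1 : Fin 3)) = 1/13 * (0 : ℂ) := rfl
lemma pE_22_12 : ptrans rho55 ((2 : Fin 3), (2 : Fin 3)) ((1 : Fin 3), (2 : Fin 3)) = 1/13 * (0 : ℂ) := rfl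
lemma pE_22_20 : ptrans rho55 ((2 : Fin 3), (2 : Fin 3)) ((2 : Fin 3), (0 : Fin 3)) = 1/13 * (0 : ℂ) := rfl
lemma pE_22_21 : ptrans rho55 ((2 : Fin 3), (2 : Fin 3)) ((2 : Fin 3), (1 : Fin 3)) = 1/13 * (-2 : ℂ) := rfl
lemma pE_22_22 : ptrans rho55 ((2 : Fin 3), (2 : Fin 3)) ((2 : Fin 3), (2 : Fin 3)) = 1/13 * (3 : ℂ) := rfl

noncomputable def Y1 : Fin 3 × Fin 3 → ℂ := fun p => ![1, 0, 0, 0, 0, 0, 0, 0, 0] (idx p)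
noncomputable def Y2 : Fin 3 × Fin 3 → ℂ := fun p => ![0, 0, 0, 0, 1, 0, 0, 0, 0] (idx p)
noncomputable def Y3 : Fin 3 × Fin 3 → ℂ := fun p => ![0, 0, 0, 0, 0, -1, 1, 0, 0] (idx p)
noncomputable def Y4 : Fin 3 × Fin 3 → ℂ := fun p => ![0, 0, 1, 0, 0, 0, 0, 1, 1] (idx p)
noncomputable def Y5 : Fin 3 × Fin 3 → ℂ := fun p => ![0, -1, -2, 0, 0, 0, 0, 1, 0] (idx p)
noncomputable def Y6 : Fin 3 × Fin 3 → ℂ := fun p => ![0, 1, 2, -1, 0, -1, -1, 0, 1] (idx p)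

lemma Y1_00 : Y1 ((0 : Fin 3), (0 : Fin 3)) = (1 : ℂ) := rfl
lemma Y1_01 : Y1 ((0 : Fin 3), (1 : Fin 3)) = (0 : ℂ) := rfl
lemma Y1_02 : Y1 ((0 : Fin 3), (2 : Fin 3)) = (0 : ℂ) := rfl
lemma Y1_10 : Y1 ((1 : Fin 3), (0 : Fin 3)) = (0 : ℂ) := rfl
lemma Y1_11 : Y1 ((1 : Fin 3), (1 : Fin 3)) = (0 : ℂ) := rfl
lemma Y1_12 : Y1 ((1 : Fin 3), (2 : Fin 3)) = (0 : ℂ) := rfl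
lemma Y1_20 : Y1 ((2 : Fin 3), (0 : Fin 3)) = (0 : ℂ) := rfl
lemma Y1_21 : Y1 ((2 : Fin 3), (1 : Fin 3)) = (0 : ℂ) := rfl
lemma Y1_22 : Y1 ((2 : Fin 3), (2 : Fin 3)) = (0 : ℂ) := rfl
lemma Y1_real : ∀ p, (starRingEnd ℂ) (Y1 p) = Y1 p := by
  have h : ∀ n : Fin 9, (starRingEnd ℂ) ((![1, 0, 0, 0, 0, 0, 0, 0, 0] : Fin 9 → ℂ) n) = (![1, 0, 0, 0, 0, 0, 0, 0, 0] : Fin 9 → ℂ) n := by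
    simp only [Fin.forall_fin_succ, IsEmpty.forall_iff, Fin.forall_fin_one,
      Matrix.cons_val_zero, Matrix.cons_val_succ, and_true]
    norm_num [map_ofNat]
  exact fun p => h (idx p)
lemma Y2_00 : Y2 ((0 : Fin 3), (0 : Fin 3)) = (0 : ℂ) := rfl
lemma Y2_01 : Y2 ((0 : Fin 3), (1 : Fin 3)) = (0 : ℂ) := rfl
lemma Y2_02 : Y2 ((0 : Fin 3), (2 : Fin 3)) = (0 : ℂ) := rfl
lemma Y2_10 : Y2 ((1 : Fin 3), (0 : Fin 3)) = (0 : ℂ) := rfl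
lemma Y2_11 : Y2 ((1 : Fin 3), (1 : Fin 3)) = (1 : ℂ) := rfl
lemma Y2_12 : Y2 ((1 : Fin 3), (2 : Fin 3)) = (0 : ℂ) := rfl
lemma Y2_20 : Y2 ((2 : Fin 3), (0 : Fin 3)) = (0 : ℂ) := rfl
lemma Y2_21 : Y2 ((2 : Fin 3), (1 : Fin 3)) = (0 : ℂ) := rfl
lemma Y2_22 : Y2 ((2 : Fin 3), (2 : Fin 3)) = (0 : ℂ) := rfl
lemma Y2_real : ∀ p, (starRingEnd ℂ) (Y2 p) = Y2 p := by
  have h : ∀ n : Fin 9, (starRingEnd ℂ) ((![0, 0, 0, 0, 1, 0, 0, 0, 0] : Fin 9 → ℂ) n) = (![0, 0, 0, 0, 1, 0, 0, 0, 0] : Fin 9 → ℂ) n := by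
    simp only [Fin.forall_fin_succ, IsEmpty.forall_iff, Fin.forall_fin_one,
      Matrix.cons_val_zero, Matrix.cons_val_succ, and_true]
    norm_num [map_ofNat]
  exact fun p => h (idx p)
lemma Y3_00 : Y3 ((0 : Fin 3), (0 : Fin 3)) = (0 : ℂ) := rfl
lemma Y3_01 : Y3 ((0 : Fin 3), (1 : Fin 3)) = (0 : ℂ) := rfl
lemma Y3_02 : Y3 ((0 : Fin 3), (2 : Fin 3)) = (0 : ℂ) := rfl
lemma Y3_10 : Y3 ((1 : Fin 3), (0 : Fin 3)) = (0 : ℂ) := rfl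
lemma Y3_11 : Y3 ((1 : Fin 3), (1 : Fin 3)) = (0 : ℂ) := rfl
lemma Y3_12 : Y3 ((1 : Fin 3), (2 : Fin 3)) = (-1 : ℂ) := rfl
lemma Y3_20 : Y3 ((2 : Fin 3), (0 : Fin 3)) = (1 : ℂ) := rfl
lemma Y3_21 : Y3 ((2 : Fin 3), (1 : Fin 3)) = (0 : ℂ) := rfl
lemma Y3_22 : Y3 ((2 : Fin 3), (2 : Fin 3)) = (0 : ℂ) := rfl
lemma Y3_real : ∀ p, (starRingEnd ℂ) (Y3 p) = Y3 p := by
  have h : ∀ n : Fin 9, (starRingEnd ℂ) ((![0, 0, 0, 0, 0, -1, 1, 0, 0] : Fin 9 → ℂ) n) = (![0, 0, 0, 0, 0, -1, 1, 0, 0] : Fin 9 → ℂ) n := by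
    simp only [Fin.forall_fin_succ, IsEmpty.forall_iff, Fin.forall_fin_one,
      Matrix.cons_val_zero, Matrix.cons_val_succ, and_true]
    norm_num [map_ofNat]
  exact fun p => h (idx p)
lemma Y4_00 : Y4 ((0 : Fin 3), (0 : Fin 3)) = (0 : ℂ) := rfl
lemma Y4_01 : Y4 ((0 : Fin 3), (1 : Fin 3)) = (0 : ℂ) := rfl
lemma Y4_02 : Y4 ((0 : Fin 3), (2 : Fin 3)) = (1 : ℂ) := rfl
lemma Y4_10 : Y4 ((1 : Fin 3), (0 : Fin 3)) = (0 : ℂ) := rfl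
lemma Y4_11 : Y4 ((1 : Fin 3), (1 : Fin 3)) = (0 : ℂ) := rfl
lemma Y4_12 : Y4 ((1 : Fin 3), (2 : Fin 3)) = (0 : ℂ) := rfl
lemma Y4_20 : Y4 ((2 : Fin 3), (0 : Fin 3)) = (0 : ℂ) := rfl
lemma Y4_21 : Y4 ((2 : Fin 3), (1 : Fin 3)) = (1 : ℂ) := rfl
lemma Y4_22 : Y4 ((2 : Fin 3), (2 : Fin 3)) = (1 : ℂ) := rfl
lemma Y4_real : ∀ p, (starRingEnd ℂ) (Y4 p) = Y4 p := by
  have h : ∀ n : Fin 9, (starRingEnd ℂ) ((![0, 0, 1, 0, 0, 0, 0, 1, 1] : Fin 9 → ℂ) n) = (![0, 0, 1, 0, 0, 0, 0, 1, 1] : Fin 9 → ℂ) n := by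
    simp only [Fin.forall_fin_succ, IsEmpty.forall_iff, Fin.forall_fin_one,
      Matrix.cons_val_zero, Matrix.cons_val_succ, and_true]
    norm_num [map_ofNat]
  exact fun p => h (idx p)
lemma Y5_00 : Y5 ((0 : Fin 3), (0 : Fin 3)) = (0 : ℂ) := rfl
lemma Y5_01 : Y5 ((0 : Fin 3), (1 : Fin 3)) = (-1 : ℂ) := rfl
lemma Y5_02 : Y5 ((0 : Fin 3), (2 : Fin 3)) = (-2 : ℂ) := rfl
lemma Y5_10 : Y5 ((1 : Fin 3), (0 : Fin 3)) = (0 : ℂ) := rfl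
lemma Y5_11 : Y5 ((1 : Fin 3), (1 : Fin 3)) = (0 : ℂ) := rfl
lemma Y5_12 : Y5 ((1 : Fin 3), (2 : Fin 3)) = (0 : ℂ) := rfl
lemma Y5_20 : Y5 ((2 : Fin 3), (0 : Fin 3)) = (0 : ℂ) := rfl
lemma Y5_21 : Y5 ((2 : Fin 3), (1 : Fin 3)) = (1 : ℂ) := rfl
lemma Y5_22 : Y5 ((2 : Fin 3), (2 : Fin 3)) = (0 : ℂ) := rfl
lemma Y5_real : ∀ p, (starRingEnd ℂ) (Y5 p) = Y5 p := by
  have h : ∀ n : Fin 9, (starRingEnd ℂ) ((![0, -1, -2, 0, 0, 0, 0, 1, 0] : Fin 9 → ℂ) n) = (![0, -1, -2, 0, 0, 0, 0, 1, 0] : Fin 9 → ℂ) n := by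
    simp only [Fin.forall_fin_succ, IsEmpty.forall_iff, Fin.forall_fin_one,
      Matrix.cons_val_zero, Matrix.cons_val_succ, and_true]
    norm_num [map_ofNat]
  exact fun p => h (idx p)
lemma Y6_00 : Y6 ((0 : Fin 3), (0 : Fin 3)) = (0 : ℂ) := rfl
lemma Y6_01 : Y6 ((0 : Fin 3), (1 : Fin 3)) = (1 : ℂ) := rfl
lemma Y6_02 : Y6 ((0 : Fin 3), (2 : Fin 3)) = (2 : ℂ) := rfl
lemma Y6_10 : Y6 ((1 : Fin 3), (0 : Fin 3)) = (-1 : ℂ) := rfl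
lemma Y6_11 : Y6 ((1 : Fin 3), (1 : Fin 3)) = (0 : ℂ) := rfl
lemma Y6_12 : Y6 ((1 : Fin 3), (2 : Fin 3)) = (-1 : ℂ) := rfl
lemma Y6_20 : Y6 ((2 : Fin 3), (0 : Fin 3)) = (-1 : ℂ) := rfl
lemma Y6_21 : Y6 ((2 : Fin 3), (1 : Fin 3)) = (0 : ℂ) := rfl
lemma Y6_22 : Y6 ((2 : Fin 3), (2 : Fin 3)) = (1 : ℂ) := rfl
lemma Y6_real : ∀ p, (starRingEnd ℂ) (Y6 p) = Y6 p := by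
  have h : ∀ n : Fin 9, (starRingEnd ℂ) ((![0, 1, 2, -1, 0, -1, -1, 0, 1] : Fin 9 → ℂ) n) = (![0, 1, 2, -1, 0, -1, -1, 0, 1] : Fin 9 → ℂ) n := by
    simp only [Fin.forall_fin_succ, IsEmpty.forall_iff, Fin.forall_fin_one,
      Matrix.cons_val_zero, Matrix.cons_val_succ, and_true]
    norm_num [map_ofNat]
  exact fun p => h (idx p)

/-! ### Quadratic form lemma -/

lemma quad_zero {k : ℕ} (w : Fin k → (Fin 3 × Fin 3) → ℂ) (y : (Fin 3 × Fin 3) → ℂ)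
    (hy : ∀ p, (starRingEnd ℂ) (y p) = y p)
    (hQ : ∑ p : Fin 3 × Fin 3, ∑ q : Fin 3 × Fin 3,
        y p * y q * (∑ i : Fin k, w i p * (starRingEnd ℂ) (w i q)) = 0) :
    ∀ i : Fin k, ∑ p : Fin 3 × Fin 3, y p * w i p = 0 := by
  have e1 : ∀ p q : Fin 3 × Fin 3, y p * y q * (∑ i : Fin k, w i p * (starRingEnd ℂ) (w i q))
      = ∑ i : Fin k, (y p * w i p) * (y q * (starRingEnd ℂ) (w i q)) := by
    intro p q
    rw [Finset.mul_sum]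
    exact Finset.sum_congr rfl fun i _ => by ring
  have e2 : ∑ p : Fin 3 × Fin 3, ∑ q : Fin 3 × Fin 3,
        y p * y q * (∑ i : Fin k, w i p * (starRingEnd ℂ) (w i q))
      = ∑ i : Fin k, (∑ p : Fin 3 × Fin 3, y p * w i p)
          * (∑ q : Fin 3 × Fin 3, y q * (starRingEnd ℂ) (w i q)) := by
    simp_rw [e1]
    have swap1 : ∀ p : Fin 3 × Fin 3, ∑ q : Fin 3 × Fin 3, ∑ i : Fin k,
        (y p * w i p) * (y q * (starRingEnd ℂ) (w i q))
        = ∑ i : Fin k, ∑ q : Fin 3 × Fin 3, (y p * w i p) * (y q * (starRingEnd ℂ) (w i q)) :=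
      fun p => Finset.sum_comm
    simp_rw [swap1]
    rw [Finset.sum_comm]
    exact Finset.sum_congr rfl fun i _ => (Finset.sum_mul_sum _ _ _ _).symm
  have e3 : ∀ i : Fin k, ∑ q : Fin 3 × Fin 3, y q * (starRingEnd ℂ) (w i q)
      = (starRingEnd ℂ) (∑ p : Fin 3 × Fin 3, y p * w i p) := by
    intro i
    rw [_root_.map_sum]
    exact Finset.sum_congr rfl fun q _ => by rw [_root_.map_mul, hy q]
  have key : ∑ i : Fin k, Complex.normSq (∑ p : Fin 3 × Fin 3, y p * w i p) = 0 := by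
    have hc : ((∑ i : Fin k, Complex.normSq (∑ p : Fin 3 × Fin 3, y p * w i p) : ℝ) : ℂ) = 0 := by
      push_cast
      calc ∑ i : Fin k, (Complex.normSq (∑ p : Fin 3 × Fin 3, y p * w i p) : ℂ)
          = ∑ i : Fin k, (∑ p : Fin 3 × Fin 3, y p * w i p)
              * (starRingEnd ℂ) (∑ p : Fin 3 × Fin 3, y p * w i p) :=
            Finset.sum_congr rfl fun i _ => (Complex.mul_conj _).symm
        _ = ∑ i : Fin k, (∑ p : Fin 3 × Fin 3, y p * w i p)
              * (∑ q : Fin 3 × Fin 3, y q * (starRingEnd ℂ) (w i q)) :=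
            Finset.sum_congr rfl fun i _ => by rw [e3 i]
        _ = 0 := by rw [← e2]; exact hQ
    exact_mod_cast hc
  intro i
  have h0 := (Finset.sum_eq_zero_iff_of_nonneg
    (fun j _ => Complex.normSq_nonneg _)).mp key i (Finset.mem_univ i)
  exact Complex.normSq_eq_zero.mp h0

/-! ### The key case analysis: the range/kernel constraints kill every product vector -/

lemma key_cases (A B : Fin 3 → ℂ)
    (h1 : A 0 * B 0 = 0)
    (h2 : A 1 * B 1 = 0)
    (h3 : A 2 * B 0 - A 1 * B 2 = 0)
    (h4 : A 0 * B 2 + A 2 * B 1 + A 2 * B 2 = 0)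
    (h5 : -(A 0 * (starRingEnd ℂ) (B 1)) - 2 * (A 0 * (starRingEnd ℂ) (B 2))
        + A 2 * (starRingEnd ℂ) (B 1) = 0)
    (h6 : A 0 * (starRingEnd ℂ) (B 1) + 2 * (A 0 * (starRingEnd ℂ) (B 2))
        - A 1 * (starRingEnd ℂ) (B 0) - A 1 * (starRingEnd ℂ) (B 2)
        - A 2 * (starRingEnd ℂ) (B 0) + A 2 * (starRingEnd ℂ) (B 2) = 0) :
    (∀ j, A j = 0) ∨ (∀ j, B j = 0) := by
  have cz : ∀ z : ℂ, (starRingEnd ℂ) z = 0 ↔ z = 0 := fun z => map_eq_zero _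
  rcases mul_eq_zero.mp h1 with hA0 | hB0
  · rcases mul_eq_zero.mp h2 with hA1 | hB1
    · -- Case 1 : A 0 = 0, A 1 = 0
      by_cases hA2 : A 2 = 0
      · left; intro j; fin_cases j <;> assumption
      · right
        have e3 : A 2 * B 0 = 0 := by linear_combination h3 + B 2 * hA1
        have hB0 : B 0 = 0 := (mul_eq_zero.mp e3).resolve_left hA2
        have hcB0 : (starRingEnd ℂ) (B 0) = 0 := (cz _).mpr hB0
        have e5 : A 2 * (starRingEnd ℂ) (B 1) = 0 := by
          linear_combination h5 + (starRingEnd ℂ) (B 1) * hA0 + 2 * (starRingEnd ℂ) (B 2) * hA0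
        have hB1 : B 1 = 0 := (cz _).mp ((mul_eq_zero.mp e5).resolve_left hA2)
        have e6 : A 2 * (starRingEnd ℂ) (B 2) = 0 := by
          linear_combination h6 - (starRingEnd ℂ) (B 1) * hA0 - 2 * (starRingEnd ℂ) (B 2) * hA0
            + (starRingEnd ℂ) (B 0) * hA1 + (starRingEnd ℂ) (B 2) * hA1 + A 2 * hcB0
        have hB2 : B 2 = 0 := (cz _).mp ((mul_eq_zero.mp e6).resolve_left hA2)
        intro j; fin_cases j <;> assumption
    · -- Case 2 : A 0 = 0, B 1 = 0
      have hcB1 : (starRingEnd ℂ) (B 1) = 0 := (cz _).mpr hB1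
      by_cases hA2 : A 2 = 0
      · -- A 2 = 0
        by_cases hA1 : A 1 = 0
        · left; intro j; fin_cases j <;> assumption
        · right
          have e3 : A 1 * B 2 = 0 := by linear_combination -h3 + B 0 * hA2
          have hB2 : B 2 = 0 := (mul_eq_zero.mp e3).resolve_left hA1
          have hcB2 : (starRingEnd ℂ) (B 2) = 0 := (cz _).mpr hB2
          have e6 : A 1 * (starRingEnd ℂ) (B 0) = 0 := by
            linear_combination -h6 + (starRingEnd ℂ) (B 1) * hA0 + 2 * (starRingEnd ℂ) (B 2) * hA0
              - A 1 * hcB2 - (starRingEnd ℂ) (B 0) * hA2 + (starRingEnd ℂ) (B 2) * hA2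
          have hB0 : B 0 = 0 := (cz _).mp ((mul_eq_zero.mp e6).resolve_left hA1)
          intro j; fin_cases j <;> assumption
      · -- A 2 ≠ 0
        have e4 : A 2 * B 2 = 0 := by linear_combination h4 - B 2 * hA0 - A 2 * hB1
        have hB2 : B 2 = 0 := (mul_eq_zero.mp e4).resolve_left hA2
        have hcB2 : (starRingEnd ℂ) (B 2) = 0 := (cz _).mpr hB2
        have e3 : A 2 * B 0 = 0 := by linear_combination h3 + A 1 * hB2
        have hB0 : B 0 = 0 := (mul_eq_zero.mp e3).resolve_left hA2
        right; intro j; fin_cases j <;> assumption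
  · -- B 0 = 0
    have hcB0 : (starRingEnd ℂ) (B 0) = 0 := (cz _).mpr hB0
    rcases mul_eq_zero.mp h2 with hA1 | hB1
    · -- Case 3 : B 0 = 0, A 1 = 0
      by_cases hA2 : A 2 = 0
      · by_cases hA0 : A 0 = 0
        · left; intro j; fin_cases j <;> assumption
        · right
          -- h5 : A 0 * (C1 + 2 C2) = 0, so C1 = -2 C2, i.e. B 1 = -2 * B 2
          have e5 : A 0 * ((starRingEnd ℂ) (B 1) + 2 * (starRingEnd ℂ) (B 2)) = 0 := by
            linear_combination -h5 + (starRingEnd ℂ) (B 1) * hA2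
          have eC : (starRingEnd ℂ) (B 1) + 2 * (starRingEnd ℂ) (B 2) = 0 :=
            (mul_eq_zero.mp e5).resolve_left hA0
          have eB : B 1 + 2 * B 2 = 0 := by
            have := congrArg (starRingEnd ℂ) eC
            simpa [map_add, _root_.map_mul, map_ofNat, Complex.conj_conj] using this
          have e4 : A 0 * B 2 = 0 := by linear_combination h4 - B 1 * hA2 - B 2 * hA2
          have hB2 : B 2 = 0 := (mul_eq_zero.mp e4).resolve_left hA0
          have hB1 : B 1 = 0 := by linear_combination eB - 2 * hB2
          intro j; fin_cases j <;> assumption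
      · -- A 2 ≠ 0
        -- h5 + h6 (with A1 = 0, C0 = 0): A 2 * (C1 + C2) = 0
        have e56 : A 2 * ((starRingEnd ℂ) (B 1) + (starRingEnd ℂ) (B 2)) = 0 := by
          linear_combination h5 + h6 + (starRingEnd ℂ) (B 0) * hA1 + (starRingEnd ℂ) (B 2) * hA1
            + A 2 * hcB0
        have eC : (starRingEnd ℂ) (B 1) + (starRingEnd ℂ) (B 2) = 0 :=
          (mul_eq_zero.mp e56).resolve_left hA2
        have eB : B 1 + B 2 = 0 := by
          have := congrArg (starRingEnd ℂ) eC
          simpa [map_add, Complex.conj_conj] using this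
        -- h4 with B 1 = -B 2 : A 0 * B 2 = 0
        have e4 : A 0 * B 2 = 0 := by linear_combination h4 - A 2 * eB
        rcases mul_eq_zero.mp e4 with hA0 | hB2
        · right
          have e5 : A 2 * (starRingEnd ℂ) (B 1) = 0 := by
            linear_combination h5 + (starRingEnd ℂ) (B 1) * hA0 + 2 * (starRingEnd ℂ) (B 2) * hA0
          have hB1 : B 1 = 0 := (cz _).mp ((mul_eq_zero.mp e5).resolve_left hA2)
          have hB2 : B 2 = 0 := by linear_combination eB - hB1
          intro j; fin_cases j <;> assumption
        · right
          have hB1 : B 1 = 0 := by linear_combination eB - hB2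
          intro j; fin_cases j <;> assumption
    · -- Case 4 : B 0 = 0, B 1 = 0
      have hcB1 : (starRingEnd ℂ) (B 1) = 0 := (cz _).mpr hB1
      by_cases hB2 : B 2 = 0
      · right; intro j; fin_cases j <;> assumption
      · left
        have hcB2 : (starRingEnd ℂ) (B 2) ≠ 0 := fun h => hB2 ((cz _).mp h)
        have e3 : A 1 * B 2 = 0 := by linear_combination -h3 + A 2 * hB0
        have hA1 : A 1 = 0 := (mul_eq_zero.mp e3).resolve_right hB2
        have e4 : (A 0 + A 2) * B 2 = 0 := by linear_combination h4 - A 2 * hB1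
        have hA02 : A 0 + A 2 = 0 := (mul_eq_zero.mp e4).resolve_right hB2
        have e6 : (2 * A 0 + A 2 - A 1) * (starRingEnd ℂ) (B 2) = 0 := by
          linear_combination h6 - A 0 * hcB1 + A 1 * hcB0 + A 2 * hcB0
        have hA6 : 2 * A 0 + A 2 - A 1 = 0 := (mul_eq_zero.mp e6).resolve_right hcB2
        have hA0 : A 0 = 0 := by linear_combination hA6 - hA02 + hA1
        have hA2 : A 2 = 0 := by linear_combination hA02 - hA0
        intro j; fin_cases j <;> assumption

/-! ### Main theorem -/

set_option maxHeartbeats 4000000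

/-- `ρ₅₅` is a PPT entangled state: it is positive semidefinite,
its partial transpose is positive semidefinite, and it is not separable. -/
theorem rho55_ppt_entangled :
    rho55.PosSemidef ∧ (ptrans rho55).PosSemidef ∧ ¬ IsSeparableState rho55 := by
  refine ⟨rho55_psd, ptrans_psd, ?_⟩
  rintro ⟨k, a, b, hsum⟩
  -- the entry formula for rho55
  have hE : ∀ p q : Fin 3 × Fin 3, rho55 p q
      = ∑ i : Fin k, (a i p.1 * b i p.2) * (starRingEnd ℂ) (a i q.1 * b i q.2) := by
    intro p q
    rw [hsum]
    simp [Matrix.sum_apply, Matrix.vecMulVec_apply, prodVec]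
  -- the entry formula for the partial transpose
  have hEu : ∀ p q : Fin 3 × Fin 3, ptrans rho55 p q
      = ∑ i : Fin k, (a i p.1 * (starRingEnd ℂ) (b i p.2))
          * (starRingEnd ℂ) (a i q.1 * (starRingEnd ℂ) (b i q.2)) := by
    intro p q
    show rho55 (p.1, q.2) (q.1, p.2) = _
    rw [hE]
    refine Finset.sum_congr rfl fun i _ => ?_
    simp only [_root_.map_mul, Complex.conj_conj]
    ring
  set w : Fin k → (Fin 3 × Fin 3) → ℂ := fun i p => a i p.1 * b i p.2 with hw
  set u : Fin k → (Fin 3 × Fin 3) → ℂ := fun i p => a i p.1 * (starRingEnd ℂ) (b i p.2) with hu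
  have hEw : ∀ p q : Fin 3 × Fin 3, (∑ i : Fin k, w i p * (starRingEnd ℂ) (w i q)) = rho55 p q :=
    fun p q => (hE p q).symm
  have hEu' : ∀ p q : Fin 3 × Fin 3, (∑ i : Fin k, u i p * (starRingEnd ℂ) (u i q))
      = ptrans rho55 p q := fun p q => (hEu p q).symm
  -- the six vanishing quadratic forms
  have hQ1 : ∑ p : Fin 3 × Fin 3, ∑ q : Fin 3 × Fin 3,
      Y1 p * Y1 q * (∑ i : Fin k, w i p * (starRingEnd ℂ) (w i q)) = 0 := by
    simp only [hEw]
    simp only [Fintype.sum_prod_type, Fin.sum_univ_three, Y1_00, Y1_01, Y1_02, Y1_10, Y1_11, Y1_12, Y1_20, Y1_21, Y1_22,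
      rE_00_00, rE_00_01, rE_00_02, rE_00_10, rE_00_11, rE_00_12, rE_00_20, rE_00_21, rE_00_22, rE_01_00, rE_01_01, rE_01_02, rE_01_10, rE_01_11, rE_01_12, rE_01_20, rE_01_21, rE_01_22, rE_02_00, rE_02_01, rE_02_02, rE_02_10, rE_02_11, rE_02_12, rE_02_20, rE_02_21, rE_02_22, rE_10_00, rE_10_01, rE_10_02, rE_10_10, rE_10_11, rE_10_12, rE_10_20, rE_10_21, rE_10_22, rE_11_00, rE_11_01, rE_11_02, rE_11_10, rE_11_11, rE_11_12, rE_11_20, rE_11_21, rE_11_22, rE_12_00, rE_12_01, rE_12_02, rE_12_10, rE_12_11, rE_12_12, rE_12_20, rE_12_21, rE_12_22, rE_20_00, rE_20_01, rE_20_02, rE_20_10, rE_20_11, rE_20_12, rE_20_20, rE_20_21, rE_20_22, rE_21_00, rE_21_01, rE_21_02, rE_21_10, rE_21_11, rE_21_12, rE_21_20, rE_21_21, rE_21_22, rE_22_00, rE_22_01, rE_22_02, rE_22_10, rE_22_11, rE_22_12, rE_22_20, rE_22_21, rE_22_22,]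
    norm_num
  have hQ2 : ∑ p : Fin 3 × Fin 3, ∑ q : Fin 3 × Fin 3,
      Y2 p * Y2 q * (∑ i : Fin k, w i p * (starRingEnd ℂ) (w i q)) = 0 := by
    simp only [hEw]
    simp only [Fintype.sum_prod_type, Fin.sum_univ_three, Y2_00, Y2_01, Y2_02, Y2_10, Y2_11, Y2_12, Y2_20, Y2_21, Y2_22,
      rE_00_00, rE_00_01, rE_00_02, rE_00_10, rE_00_11, rE_00_12, rE_00_20, rE_00_21, rE_00_22, rE_01_00, rE_01_01, rE_01_02, rE_01_10, rE_01_11, rE_01_12, rE_01_20, rE_01_21, rE_01_22, rE_02_00, rE_02_01, rE_02_02, rE_02_10, rE_02_11, rE_02_12, rE_02_20, rE_02_21, rE_02_22, rE_10_00, rE_10_01, rE_10_02, rE_10_10, rE_10_11, rE_10_12, rE_10_20, rE_10_21, rE_10_22, rE_11_00, rE_11_01, rE_11_02, rE_11_10, rE_11_11, rE_11_12, rE_11_20, rE_11_21, rE_11_22, rE_12_00, rE_12_01, rE_12_02, rE_12_10, rE_12_11, rE_12_12, rE_12_20, rE_12_21, rE_12_22, rE_20_00, rE_20_01, rE_20_02,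 rE_20_10, rE_20_11, rE_20_12, rE_20_20, rE_20_21, rE_20_22, rE_21_00, rE_21_01, rE_21_02, rE_21_10, rE_21_11, rE_21_12, rE_21_20, rE_21_21, rE_21_22, rE_22_00, rE_22_01, rE_22_02, rE_22_10, rE_22_11, rE_22_12, rE_22_20, rE_22_21, rE_22_22,]
    norm_num
  have hQ3 : ∑ p : Fin 3 × Fin 3, ∑ q : Fin 3 × Fin 3,
      Y3 p * Y3 q * (∑ i : Fin k, w i p * (starRingEnd ℂ) (w i q)) = 0 := by
    simp only [hEw]
    simp only [Fintype.sum_prod_type, Fin.sum_univ_three, Y3_00, Y3_01, Y3_02, Y3_10, Y3_11, Y3_12, Y3_20, Y3_21, Y3_22,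
      rE_00_00, rE_00_01, rE_00_02, rE_00_10, rE_00_11, rE_00_12, rE_00_20, rE_00_21, rE_00_22, rE_01_00, rE_01_01, rE_01_02, rE_01_10, rE_01_11, rE_01_12, rE_01_20, rE_01_21, rE_01_22, rE_02_00, rE_02_01, rE_02_02, rE_02_10, rE_02_11, rE_02_12, rE_02_20, rE_02_21, rE_02_22, rE_10_00, rE_10_01, rE_10_02, rE_10_10, rE_10_11, rE_10_12, rE_10_20, rE_10_21, rE_10_22, rE_11_00, rE_11_01, rE_11_02, rE_11_10, rE_11_11, rE_11_12, rE_11_20, rE_11_21, rE_11_22, rE_12_00, rE_12_01, rE_12_02, rE_12_10, rE_12_11, rE_12_12, rE_12_20, rE_12_21, rE_12_22, rE_20_00, rE_20_01, rE_20_02, rE_20_10, rE_20_11, rE_20_12, rE_20_20, rE_20_21, rE_20_22, rE_21_00, rE_21_01, rE_21_02, rE_21_10, rE_21_11, rE_21_12, rE_21_20, rE_21_21, rE_21_22, rE_22_00, rE_22_01, rE_22_02, rE_22_10, rE_22_11, rE_22_12, rE_22_20, rE_22_21, rE_22_22,]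
    norm_num
  have hQ4 : ∑ p : Fin 3 × Fin 3, ∑ q : Fin 3 × Fin 3,
      Y4 p * Y4 q * (∑ i : Fin k, w i p * (starRingEnd ℂ) (w i q)) = 0 := by
    simp only [hEw]
    simp only [Fintype.sum_prod_type, Fin.sum_univ_three, Y4_00, Y4_01, Y4_02, Y4_10, Y4_11, Y4_12, Y4_20, Y4_21, Y4_22,
      rE_00_00, rE_00_01, rE_00_02, rE_00_10, rE_00_11, rE_00_12, rE_00_20, rE_00_21, rE_00_22, rE_01_00, rE_01_01, rE_01_02, rE_01_10, rE_01_11, rE_01_12, rE_01_20, rE_01_21, rE_01_22, rE_02_00, rE_02_01, rE_02_02, rE_02_10, rE_02_11, rE_02_12, rE_02_20, rE_02_21, rE_02_22, rE_10_00, rE_10_01, rE_10_02, rE_10_10, rE_10_11, rE_10_12, rE_10_20, rE_10_21, rE_10_22, rE_11_00, rE_11_01, rE_11_02, rE_11_10, rE_11_11, rE_11_12, rE_11_20, rE_11_21, rE_11_22, rE_12_00, rE_12_01, rE_12_02, rE_12_10, rE_12_11, rE_12_12, rE_12_20, rE_12_21, rE_12_22, rE_20_00, rE_20_01, rE_20_02,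 rE_20_10, rE_20_11, rE_20_12, rE_20_20, rE_20_21, rE_20_22, rE_21_00, rE_21_01, rE_21_02, rE_21_10, rE_21_11, rE_21_12, rE_21_20, rE_21_21, rE_21_22, rE_22_00, rE_22_01, rE_22_02, rE_22_10, rE_22_11, rE_22_12, rE_22_20, rE_22_21, rE_22_22,]
    norm_num
  have hQ5 : ∑ p : Fin 3 × Fin 3, ∑ q : Fin 3 × Fin 3,
      Y5 p * Y5 q * (∑ i : Fin k, u i p * (starRingEnd ℂ) (u i q)) = 0 := by
    simp only [hEu']
    simp only [Fintype.sum_prod_type, Fin.sum_univ_three, Y5_00, Y5_01, Y5_02, Y5_10, Y5_11, Y5_12, Y5_20, Y5_21, Y5_22,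
      pE_00_00, pE_00_01, pE_00_02, pE_00_10, pE_00_11, pE_00_12, pE_00_20, pE_00_21, pE_00_22, pE_01_00, pE_01_01, pE_01_02, pE_01_10, pE_01_11, pE_01_12, pE_01_20, pE_01_21, pE_01_22, pE_02_00, pE_02_01, pE_02_02, pE_02_10, pE_02_11, pE_02_12, pE_02_20, pE_02_21, pE_02_22, pE_10_00, pE_10_01, pE_10_02, pE_10_10, pE_10_11, pE_10_12, pE_10_20, pE_10_21, pE_10_22, pE_11_00, pE_11_01, pE_11_02, pE_11_10, pE_11_11, pE_11_12, pE_11_20, pE_11_21, pE_11_22, pE_12_00, pE_12_01, pE_12_02, pE_12_10, pE_12_11, pE_12_12, pE_12_20, pE_12_21, pE_12_22, pE_20_00, pE_20_01, pE_20_02, pE_20_10, pE_20_11, pE_20_12, pE_20_20, pE_20_21, pE_20_22, pE_21_00, pE_21_01, pE_21_02, pE_21_10, pE_21_11, pE_21_12, pE_21_20, pE_21_21, pE_21_22, pE_22_00, pE_22_01, pE_22_02, pE_22_10, pE_22_11, pE_22_12, pE_22_20, pE_22_21, pE_22_22,]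
    norm_num
  have hQ6 : ∑ p : Fin 3 × Fin 3, ∑ q : Fin 3 × Fin 3,
      Y6 p * Y6 q * (∑ i : Fin k, u i p * (starRingEnd ℂ) (u i q)) = 0 := by
    simp only [hEu']
    simp only [Fintype.sum_prod_type, Fin.sum_univ_three, Y6_00, Y6_01, Y6_02, Y6_10, Y6_11, Y6_12, Y6_20, Y6_21, Y6_22,
      pE_00_00, pE_00_01, pE_00_02, pE_00_10, pE_00_11, pE_00_12, pE_00_20, pE_00_21, pE_00_22, pE_01_00, pE_01_01, pE_01_02, pE_01_10, pE_01_11, pE_01_12, pE_01_20, pE_01_21, pE_01_22, pE_02_00, pE_02_01, pE_02_02, pE_02_10, pE_02_11, pE_02_12, pE_02_20, pE_02_21, pE_02_22, pE_10_00, pE_10_01, pE_10_02, pE_10_10, pE_10_11, pE_10_12, pE_10_20, pE_10_21, pE_10_22, pE_11_00, pE_11_01, pE_11_02, pE_11_10, pE_11_11, pE_11_12, pE_11_20, pE_11_21, pE_11_22, pE_12_00, pE_12_01, pE_12_02, pE_12_10, pE_12_11, pE_12_12, pE_12_20, pE_12_21, pE_12_22, pE_20_00, pE_20_01, pE_20_02,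 pE_20_10, pE_20_11, pE_20_12, pE_20_20, pE_20_21, pE_20_22, pE_21_00, pE_21_01, pE_21_02, pE_21_10, pE_21_11, pE_21_12, pE_21_20, pE_21_21, pE_21_22, pE_22_00, pE_22_01, pE_22_02, pE_22_10, pE_22_11, pE_22_12, pE_22_20, pE_22_21, pE_22_22,]
    norm_num
  have T1 := quad_zero w Y1 Y1_real hQ1
  have T2 := quad_zero w Y2 Y2_real hQ2
  have T3 := quad_zero w Y3 Y3_real hQ3
  have T4 := quad_zero w Y4 Y4_real hQ4
  have T5 := quad_zero u Y5 Y5_real hQ5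
  have T6 := quad_zero u Y6 Y6_real hQ6
  -- each product vector is zero
  have hzero : ∀ i : Fin k, a i 0 * b i 1 = 0 := by
    intro i
    have c1 : a i 0 * b i 0 = 0 := by
      have h := T1 i
      simp only [hw, Fintype.sum_prod_type, Fin.sum_univ_three, Y1_00, Y1_01, Y1_02, Y1_10, Y1_11, Y1_12, Y1_20, Y1_21, Y1_22,] at h
      linear_combination h
    have c2 : a i 1 * b i 1 = 0 := by
      have h := T2 i
      simp only [hw, Fintype.sum_prod_type, Fin.sum_univ_three, Y2_00, Y2_01, Y2_02, Y2_10, Y2_11, Y2_12, Y2_20, Y2_21, Y2_22,] at h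
      linear_combination h
    have c3 : a i 2 * b i 0 - a i 1 * b i 2 = 0 := by
      have h := T3 i
      simp only [hw, Fintype.sum_prod_type, Fin.sum_univ_three, Y3_00, Y3_01, Y3_02, Y3_10, Y3_11, Y3_12, Y3_20, Y3_21, Y3_22,] at h
      linear_combination h
    have c4 : a i 0 * b i 2 + a i 2 * b i 1 + a i 2 * b i 2 = 0 := by
      have h := T4 i
      simp only [hw, Fintype.sum_prod_type, Fin.sum_univ_three, Y4_00, Y4_01, Y4_02, Y4_10, Y4_11, Y4_12, Y4_20, Y4_21, Y4_22,] at h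
      linear_combination h
    have c5 : -(a i 0 * (starRingEnd ℂ) (b i 1)) - 2 * (a i 0 * (starRingEnd ℂ) (b i 2))
        + a i 2 * (starRingEnd ℂ) (b i 1) = 0 := by
      have h := T5 i
      simp only [hu, Fintype.sum_prod_type, Fin.sum_univ_three, Y5_00, Y5_01, Y5_02, Y5_10, Y5_11, Y5_12, Y5_20, Y5_21, Y5_22,] at h
      linear_combination h
    have c6 : a i 0 * (starRingEnd ℂ) (b i 1) + 2 * (a i 0 * (starRingEnd ℂ) (b i 2))
        - a i 1 * (starRingEnd ℂ) (b i 0) - a i 1 * (starRingEnd ℂ) (b i 2)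
        - a i 2 * (starRingEnd ℂ) (b i 0) + a i 2 * (starRingEnd ℂ) (b i 2) = 0 := by
      have h := T6 i
      simp only [hu, Fintype.sum_prod_type, Fin.sum_univ_three, Y6_00, Y6_01, Y6_02, Y6_10, Y6_11, Y6_12, Y6_20, Y6_21, Y6_22,] at h
      linear_combination h
    rcases key_cases (a i) (b i) c1 c2 c3 c4 c5 c6 with h | h
    · rw [h 0, zero_mul]
    · rw [h 1, mul_zero]
  -- contradiction with the (0,1),(0,1) entry
  have h01 := hE ((0 : Fin 3), (1 : Fin 3)) ((0 : Fin 3), (1 : Fin 3))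
  rw [rE_01_01] at h01
  rw [Finset.sum_eq_zero (fun i _ => by
    show (a i 0 * b i 1) * (starRingEnd ℂ) (a i 0 * b i 1) = 0
    rw [hzero i, zero_mul])] at h01
  norm_num at h01
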